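/- arXiv:1403.4453 — 2 statements merged into one kernel-verified Lean document; each statement's English description precedes it below -/
import Mathlib

section
/- Let F : ℝ × ℝ → ℝ be given by F(λ, x) = (α − m̃(λ))(β − m̂(λ)) − x, where m̃, m̂ : ℝ → ℝ are twice differentiable, α, β ∈ ℝ, m̂(λ₀) = β, and (m̃(λ₀) − α)·m̂'(λ₀) ≠ 0. If λ(·) is a C² function near 0 with λ(0) = λ₀ and F(λ(x), x) = 0, then λ'(0) = 1/((m̃(λ₀) − α)·m̂'(λ₀)) and λ''(0) = 2·(1/((m̃(λ₀) − α)m̂'(λ₀))²)·( m̃'(λ₀)/(α − m̃(λ₀)) − (1/2)·m̂''(λ₀)/m̂'(λ₀) ). -/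
open Set

/-- First and second order coefficients of the implicitly defined eigenvalue branch
for F(λ, x) = (α − m̃(λ))(β − m̂(λ)) − x in the case d = 1. -/
theorem branch_coefficients (mt mh : ℝ → ℝ) (α β lam₀ : ℝ)
    (hmt : ContDiff ℝ 2 mt) (hmh : ContDiff ℝ 2 mh)
    (hβ : mh lam₀ = β)
    (hne : (mt lam₀ - α) * deriv mh lam₀ ≠ 0)
    (ε : ℝ) (hε : 0 < ε) (lam : ℝ → ℝ)
    (hlam : ContDiffOn ℝ 2 lam (Ioo (-ε) ε))
    (hlam0 : lam 0 = lam₀)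
    (hsol : ∀ x ∈ Ioo (-ε) ε, (α - mt (lam x)) * (β - mh (lam x)) - x = 0) :
    deriv lam 0 = 1 / ((mt lam₀ - α) * deriv mh lam₀) ∧
    deriv (deriv lam) 0 =
      2 * (1 / ((mt lam₀ - α) * deriv mh lam₀)) ^ 2 *
        (deriv mt lam₀ / (α - mt lam₀)
          - (1 / 2) * deriv (deriv mh) lam₀ / deriv mh lam₀) := by
  set s : Set ℝ := Ioo (-ε) ε with hs_def
  have hs : IsOpen s := isOpen_Ioo
  have h0 : (0:ℝ) ∈ s := ⟨by linarith, hε⟩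
  -- differentiability facts
  have hmt1 : Differentiable ℝ mt := hmt.differentiable (by norm_num)
  have hmh1 : Differentiable ℝ mh := hmh.differentiable (by norm_num)
  have hmt' : Differentiable ℝ (deriv mt) := by
    have := (contDiff_succ_iff_deriv.mp (show ContDiff ℝ (1+1) mt by exact_mod_cast hmt)).2.2
    exact this.differentiable one_ne_zero
  have hmh' : Differentiable ℝ (deriv mh) := by
    have := (contDiff_succ_iff_deriv.mp (show ContDiff ℝ (1+1) mh by exact_mod_cast hmh)).2.2
    exact this.differentiable one_ne_zero
  have hlam' : ∀ x ∈ s, DifferentiableAt ℝ lam x := fun x hx =>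
    ((hlam.differentiableOn (by norm_num)).differentiableAt (hs.mem_nhds hx))
  have hlamd : ContDiffOn ℝ 1 (deriv lam) s := by
    have := (contDiffOn_succ_iff_deriv_of_isOpen hs).mp
      (show ContDiffOn ℝ (1+1) lam s by exact_mod_cast hlam)
    exact this.2.2
  have hlam'' : ∀ x ∈ s, DifferentiableAt ℝ (deriv lam) x := fun x hx =>
    ((hlamd.differentiableOn (by norm_num)).differentiableAt (hs.mem_nhds hx))
  -- the derivative formula
  set φ : ℝ → ℝ := fun x =>
      -(deriv mt (lam x) * deriv lam x) * (β - mh (lam x)) +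
      (α - mt (lam x)) * (-(deriv mh (lam x) * deriv lam x)) with hφ_def
  have hD : ∀ x ∈ s, HasDerivAt (fun x => (α - mt (lam x)) * (β - mh (lam x))) (φ x) x := by
    intro x hx
    have hl := (hlam' x hx).hasDerivAt
    have h1 : HasDerivAt (fun x => α - mt (lam x)) (-(deriv mt (lam x) * deriv lam x)) x :=
      (((hmt1 (lam x)).hasDerivAt.comp x hl).const_sub α)
    have h2 : HasDerivAt (fun x => β - mh (lam x)) (-(deriv mh (lam x) * deriv lam x)) x :=
      (((hmh1 (lam x)).hasDerivAt.comp x hl).const_sub β)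
    exact h1.mul h2
  -- the function equals id on s, hence φ = 1 on s
  have hφ1 : ∀ x ∈ s, φ x = 1 := by
    intro x hx
    have heq : (fun x => (α - mt (lam x)) * (β - mh (lam x))) =ᶠ[nhds x] id := by
      filter_upwards [hs.mem_nhds hx] with y hy
      have := hsol y hy
      simp only [id]; linarith
    have := (hD x hx).congr_of_eventuallyEq heq.symm
    exact this.unique (hasDerivAt_id x)
  set a := deriv lam 0 with ha_def
  set b := deriv (deriv lam) 0 with hb_def
  have hAne : mt lam₀ - α ≠ 0 := left_ne_zero_of_mul hne
  have hBne : deriv mh lam₀ ≠ 0 := right_ne_zero_of_mul hne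
  -- first equation
  have E1 : (α - mt lam₀) * (-(deriv mh lam₀ * a)) = 1 := by
    have := hφ1 0 h0
    rw [hφ_def] at this
    simp only [hlam0, hβ, sub_self, mul_zero, zero_add] at this
    linarith [this]
  have hA1 : a = 1 / ((mt lam₀ - α) * deriv mh lam₀) := by
    field_simp
    nlinarith [E1]
  refine ⟨hA1, ?_⟩
  -- second derivative: φ = 1 near 0, so deriv φ 0 = 0
  have hφc : φ =ᶠ[nhds 0] (fun _ => (1:ℝ)) := by
    filter_upwards [hs.mem_nhds h0] with y hy using hφ1 y hy
  -- compute HasDerivAt φ D 0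
  have hl0' := (hlam'' 0 h0).hasDerivAt
  have c1 : HasDerivAt (fun x => deriv mt (lam x)) (deriv (deriv mt) lam₀ * a) 0 := by
    have := ((hmt' (lam 0)).hasDerivAt.comp 0 ((hlam' 0 h0).hasDerivAt))
    rw [hlam0] at this; exact this
  have c2 : HasDerivAt (fun x => deriv mh (lam x)) (deriv (deriv mh) lam₀ * a) 0 := by
    have := ((hmh' (lam 0)).hasDerivAt.comp 0 ((hlam' 0 h0).hasDerivAt))
    rw [hlam0] at this; exact this
  have c3 : HasDerivAt (fun x => mt (lam x)) (deriv mt lam₀ * a) 0 := by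
    have := ((hmt1 (lam 0)).hasDerivAt.comp 0 ((hlam' 0 h0).hasDerivAt))
    rw [hlam0] at this; exact this
  have c4 : HasDerivAt (fun x => mh (lam x)) (deriv mh lam₀ * a) 0 := by
    have := ((hmh1 (lam 0)).hasDerivAt.comp 0 ((hlam' 0 h0).hasDerivAt))
    rw [hlam0] at this; exact this
  have hφD : HasDerivAt φ
      (-(deriv (deriv mt) lam₀ * a * a + deriv mt lam₀ * b) * (β - mh lam₀) +
        (-(deriv mt lam₀ * a)) * (-(deriv mh lam₀ * a)) +
        ((-(deriv mt lam₀ * a)) * (-(deriv mh lam₀ * a)) +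
          (α - mt lam₀) * (-(deriv (deriv mh) lam₀ * a * a + deriv mh lam₀ * b)))) 0 := by
    have f1 : HasDerivAt (fun x => -(deriv mt (lam x) * deriv lam x))
        (-(deriv (deriv mt) lam₀ * a * a + deriv mt lam₀ * b)) 0 := by
      have := (c1.mul hl0').neg
      exact this.congr_deriv (by rw [hlam0])
    have f2 : HasDerivAt (fun x => β - mh (lam x)) (-(deriv mh lam₀ * a)) 0 :=
      c4.const_sub β
    have f3 : HasDerivAt (fun x => α - mt (lam x)) (-(deriv mt lam₀ * a)) 0 :=
      c3.const_sub α
    have f4 : HasDerivAt (fun x => -(deriv mh (lam x) * deriv lam x))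
        (-(deriv (deriv mh) lam₀ * a * a + deriv mh lam₀ * b)) 0 := by
      have := (c2.mul hl0').neg
      exact this.congr_deriv (by rw [hlam0])
    have := (f1.mul f2).add (f3.mul f4)
    exact this.congr_deriv (by rw [hlam0])
  have E2 : -(deriv (deriv mt) lam₀ * a * a + deriv mt lam₀ * b) * (β - mh lam₀) +
        (-(deriv mt lam₀ * a)) * (-(deriv mh lam₀ * a)) +
        ((-(deriv mt lam₀ * a)) * (-(deriv mh lam₀ * a)) +
          (α - mt lam₀) * (-(deriv (deriv mh) lam₀ * a * a + deriv mh lam₀ * b))) = 0 := by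
    have h2 := hφD.congr_of_eventuallyEq hφc.symm
    exact h2.unique (hasDerivAt_const 0 1)
  rw [hβ, sub_self, mul_zero, zero_add] at E2
  have hAne' : α - mt lam₀ ≠ 0 := by intro h; apply hAne; linarith
  rw [hA1] at E2
  field_simp at E2 ⊢
  linarith [E2]
end

section
/- Let Q be a Hermitian d×d matrix and λ₀ real with Q − λ₀·I positive definite. Then the function λ ↦ −√(Q − λ·I) is differentiable at λ₀ with derivative (1/2)·(Q − λ₀·I)^{−1/2}. -/
open Matrix ComplexOrder

/-- The positive semidefinite square root of a positive semidefinite matrix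
(restored with its former Mathlib definition). -/
noncomputable def Matrix.PosSemidef.sqrt {n 𝕜 : Type*} [Fintype n] [DecidableEq n] [RCLike 𝕜]
    {A : Matrix n n 𝕜} (hA : A.PosSemidef) : Matrix n n 𝕜 :=
  hA.1.eigenvectorUnitary.1 * diagonal ((↑) ∘ (√·) ∘ hA.1.eigenvalues) *
    (star hA.1.eigenvectorUnitary : Matrix n n 𝕜)

open scoped MatrixOrder in
theorem Matrix.PosSemidef.eq_sqrt_of_sq_eq {n : Type*} [Fintype n] [DecidableEq n]
    {A B : Matrix n n ℂ} (hB : B.PosSemidef) (hA : A.PosSemidef) (h : B ^ 2 = A) :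
    B = hA.sqrt := by
  have e : hA.sqrt = CFC.sqrt A := by
    rw [CFC.sqrt_eq_real_sqrt A hA.nonneg, cfcₙ_eq_cfc, hA.1.cfc_eq, IsHermitian.cfc,
      Unitary.conjStarAlgAut_apply]
    rfl
  rw [e, CFC.sqrt_unique (by rw [← sq, h]) hB.nonneg]

/-- If Q − λ₀·I is positive definite, the matrix function λ ↦ −√(Q − λ·I)
(defined via the positive semidefinite square root wherever it exists) is
differentiable at λ₀ with (entrywise) derivative (1/2)·(Q − λ₀·I)^{−1/2}. -/
theorem deriv_neg_sqrt (d : ℕ) (Q : Matrix (Fin d) (Fin d) ℂ)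
    (lam₀ : ℝ)
    (hpd : (Q - (lam₀ : ℂ) • (1 : Matrix (Fin d) (Fin d) ℂ)).PosDef)
    (M : ℝ → Matrix (Fin d) (Fin d) ℂ)
    (hM : ∀ (lam : ℝ) (h : (Q - (lam : ℂ) • (1 : Matrix (Fin d) (Fin d) ℂ)).PosSemidef),
      M lam = -h.sqrt) :
    ∀ i j, HasDerivAt (fun lam => M lam i j)
      (((1 / 2 : ℂ) • (hpd.posSemidef.sqrt)⁻¹) i j) lam₀ := by
  intro i j
  have h₀ := hpd.1
  set U : Matrix (Fin d) (Fin d) ℂ := (h₀.eigenvectorUnitary : Matrix (Fin d) (Fin d) ℂ) with hUdef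
  set ev : Fin d → ℝ := h₀.eigenvalues with hevdef
  have hU1 : U * star U = 1 := (Matrix.mem_unitaryGroup_iff).mp h₀.eigenvectorUnitary.2
  have hU2 : star U * U = 1 := (Matrix.mem_unitaryGroup_iff').mp h₀.eigenvectorUnitary.2
  set C : (Fin d → ℂ) → Matrix (Fin d) (Fin d) ℂ := fun f => U * diagonal f * star U with hC
  have hmul : ∀ f g, C f * C g = C (f * g) := by
    intro f g
    simp only [hC, mul_assoc]
    rw [← mul_assoc (star U) U, hU2, one_mul, ← mul_assoc (diagonal f) (diagonal g),
      diagonal_mul_diagonal]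
    rfl
  have hone : C (fun _ => 1) = 1 := by
    simp only [hC]
    rw [show (diagonal (fun _ => (1:ℂ)) : Matrix (Fin d) (Fin d) ℂ) = 1 from diagonal_one,
      mul_one, hU1]
  have hadd : ∀ f g, C f + C g = C (f + g) := by
    intro f g
    simp only [hC]
    rw [show diagonal (f + g) = diagonal f + diagonal g by rw [diagonal_add]; rfl,
      Matrix.mul_add, Matrix.add_mul]
  have hconst : ∀ c : ℂ, c • (1 : Matrix (Fin d) (Fin d) ℂ) = C (fun _ => c) := by
    intro c
    simp only [hC]
    rw [show (diagonal (fun _ => c) : Matrix (Fin d) (Fin d) ℂ) = c • 1 by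
        rw [smul_one_eq_diagonal]]
    rw [mul_smul_comm, smul_mul_assoc, mul_one, hU1]
  have hQ0 : Q - (lam₀:ℂ) • 1 = C (fun k => ((ev k : ℝ) : ℂ)) := by
    have := h₀.spectral_theorem
    rw [Unitary.conjStarAlgAut_apply] at this
    convert this using 2
    rfl
  have hdec : ∀ lam : ℝ, Q - (lam:ℂ) • 1 = C (fun k => ((ev k + lam₀ - lam : ℝ) : ℂ)) := by
    intro lam
    have h1 : Q - (lam:ℂ) • 1 = (Q - (lam₀:ℂ) • 1) + (((lam₀ - lam : ℝ) : ℂ)) •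
        (1 : Matrix (Fin d) (Fin d) ℂ) := by
      have : ((lam₀ - lam : ℝ) : ℂ) = (lam₀:ℂ) - (lam:ℂ) := by push_cast; ring
      rw [this, sub_smul]
      abel
    rw [h1, hQ0, hconst, hadd]
    refine congrArg C (funext fun k => ?_)
    simp only [Pi.add_apply]
    push_cast
    ring
  have hpsd : ∀ r : Fin d → ℝ, (∀ k, 0 ≤ r k) → (C (fun k => ((r k : ℝ) : ℂ))).PosSemidef := by
    intro r hr
    have hd : (diagonal (fun k => ((r k : ℝ) : ℂ))).PosSemidef :=
      posSemidef_diagonal_iff.mpr fun k => by exact_mod_cast hr k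
    simpa [hC, Matrix.star_eq_conjTranspose] using hd.mul_mul_conjTranspose_same U
  have hevpos : ∀ k, 0 < ev k := hpd.eigenvalues_pos
  have hentry : ∀ f : Fin d → ℂ, C f i j = ∑ k, U i k * f k * star (U j k) := by
    intro f
    simp only [hC]
    rw [Matrix.mul_apply]
    simp only [Matrix.mul_diagonal, Matrix.star_apply]
  -- sqrt at lam₀
  have hsq0 : hpd.posSemidef.sqrt = C (fun k => ((Real.sqrt (ev k) : ℝ) : ℂ)) := by
    refine (PosSemidef.eq_sqrt_of_sq_eq (hpsd _ fun k => Real.sqrt_nonneg _)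
      hpd.posSemidef ?_).symm
    rw [pow_two, hmul, hQ0]
    refine congrArg C (funext fun k => ?_)
    show (Real.sqrt (ev k) : ℂ) * (Real.sqrt (ev k) : ℂ) = _
    rw [← Complex.ofReal_mul, Real.mul_self_sqrt (hevpos k).le]
  -- inverse of sqrt
  have hinv : (hpd.posSemidef.sqrt)⁻¹ = C (fun k => ((Real.sqrt (ev k) : ℂ))⁻¹) := by
    apply inv_eq_right_inv
    rw [hsq0, hmul, ← hone]
    refine congrArg C (funext fun k => ?_)
    simp only [Pi.mul_apply]
    have : (Real.sqrt (ev k) : ℂ) ≠ 0 := by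
      exact_mod_cast (Real.sqrt_pos.mpr (hevpos k)).ne'
    field_simp
  -- epsilon
  have hne : Nonempty (Fin d) := ⟨i⟩
  set ε : ℝ := Finset.univ.inf' Finset.univ_nonempty ev with hε
  have hεpos : 0 < ε := (Finset.lt_inf'_iff _).mpr fun k _ => hevpos k
  -- eventual equality
  have hev_eq : (fun lam => M lam i j) =ᶠ[nhds lam₀]
      (fun lam => -∑ k, U i k * ((Real.sqrt (ev k + lam₀ - lam) : ℂ)) * star (U j k)) := by
    filter_upwards [Metric.ball_mem_nhds lam₀ hεpos] with lam hlam
    have hdist : |lam - lam₀| < ε := by simpa [Real.dist_eq] using hlam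
    have hnn : ∀ k, 0 ≤ ev k + lam₀ - lam := by
      intro k
      have h1 := abs_lt.mp hdist
      have h2 : ε ≤ ev k := Finset.inf'_le _ (Finset.mem_univ k)
      linarith [h1.2]
    have hps : (Q - (lam:ℂ) • 1).PosSemidef := (hdec lam) ▸ hpsd _ hnn
    rw [hM lam hps]
    have hsql : hps.sqrt = C (fun k => ((Real.sqrt (ev k + lam₀ - lam) : ℂ))) := by
      refine (PosSemidef.eq_sqrt_of_sq_eq (hpsd _ fun k => Real.sqrt_nonneg _) hps ?_).symm
      rw [pow_two, hmul, hdec lam]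
      refine congrArg C (funext fun k => ?_)
      show (Real.sqrt (ev k + lam₀ - lam) : ℂ) * (Real.sqrt (ev k + lam₀ - lam) : ℂ) = _
      rw [← Complex.ofReal_mul, Real.mul_self_sqrt (hnn k)]
    rw [Matrix.neg_apply, hsql, hentry]
  -- derivative of the explicit function
  have hder : HasDerivAt
      (fun lam => -∑ k, U i k * ((Real.sqrt (ev k + lam₀ - lam) : ℂ)) * star (U j k))
      (-∑ k, U i k * (((1 / (2 * Real.sqrt (ev k)) * (-1) : ℝ)) : ℂ) * star (U j k)) lam₀ := by
    apply HasDerivAt.neg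
    apply HasDerivAt.fun_sum
    intro k _
    have hinner : HasDerivAt (fun lam : ℝ => ev k + lam₀ - lam) (-1) lam₀ := by
      simpa using (hasDerivAt_id lam₀).const_sub (ev k + lam₀)
    have hne0 : ev k + lam₀ - lam₀ ≠ 0 := by
      intro h; have := hevpos k; linarith
    have hsqrt : HasDerivAt (fun lam : ℝ => Real.sqrt (ev k + lam₀ - lam))
        (1 / (2 * Real.sqrt (ev k + lam₀ - lam₀)) * (-1)) lam₀ :=
      (Real.hasDerivAt_sqrt hne0).comp lam₀ hinner
    rw [show ev k + lam₀ - lam₀ = ev k by ring] at hsqrt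
    exact (hsqrt.ofReal_comp.const_mul (U i k)).mul_const (star (U j k))
  -- conclude
  have hfinal := hder.congr_of_eventuallyEq hev_eq
  convert hfinal using 1
  case e'_4 => rfl
  rw [Matrix.smul_apply, hinv, hentry, Finset.smul_sum, ← Finset.sum_neg_distrib]
  refine Finset.sum_congr rfl fun k _ => ?_
  have hsk : (Real.sqrt (ev k) : ℂ) ≠ 0 := by
    exact_mod_cast (Real.sqrt_pos.mpr (hevpos k)).ne'
  push_cast
  simp only [smul_eq_mul]
  field_simp
end
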